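/- Let V be a finite nonempty set, let H : V → V → ℝ be row-stochastic, and let μ be a stationary distribution of H satisfying the reversibility condition μ(v)H(v,w) = μ(w)H(w,v) for all v,w ∈ V. Consider the synchronous pull voter model with agnostic states (S_t)_{t≥0} with matrix H started from initial configuration s₀ ∈ {0,1,2}^V, and suppose that with probability 1 the process eventually reaches a monochromatic configuration (all vertices in state 1 or all vertices in state 2). Then ℙ(the process reaches the all-red configuration) = Σ_{v∈V} μ(v)·ℙ(R(v) | S_0 = s₀). -/

import Mathlib

open MeasureTheory Finset
open scoped ENNReal

set_option linter.unusedSectionVars false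
set_option maxHeartbeats 1000000

variable {V : Type} [Fintype V] [DecidableEq V]

/-- Result of vertex `v` pulling from vertex `w` in configuration `s`:
if `w` is gnostic, `v` copies `w`'s colour; otherwise `v` keeps its own state. -/
def pullResult (s : V → Fin 3) (v w : V) : Fin 3 :=
  if s w = 0 then s v else s w

/-- One-step transition probability of the synchronous pull voter model with agnostic
states: every vertex `v` independently selects `w` with probability `H v w` and pulls. -/
noncomputable def syncKernel (H : V → V → ℝ) (s s' : V → Fin 3) : ℝ :=
  ∏ v : V, ∑ w : V, if pullResult s v w = s' v then H v w else 0

/-- One-step transition probability of the asynchronous pull voter model: a single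
vertex `v` chosen uniformly at random selects `w` with probability `H v w` and pulls. -/
noncomputable def asyncKernel (H : V → V → ℝ) (s s' : V → Fin 3) : ℝ :=
  ∑ v : V, ∑ w : V,
    if Function.update s v (pullResult s v w) = s' then H v w / (Fintype.card V) else 0

/-- `S` is a voter-model process with one-step kernel `K` started at `s₀`:
the `S t` are measurable, `S 0 = s₀` surely, and the Markov property holds. -/
def IsVoterProcess {Ω : Type} [MeasurableSpace Ω] (P : Measure Ω)
    (K : (V → Fin 3) → (V → Fin 3) → ℝ)
    (S : ℕ → Ω → (V → Fin 3)) (s₀ : V → Fin 3) : Prop :=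
  (∀ t, Measurable (S t)) ∧
  (∀ ω, S 0 ω = s₀) ∧
  ∀ (t : ℕ) (h : ℕ → (V → Fin 3)) (s' : V → Fin 3),
    P {ω | (∀ i ≤ t, S i ω = h i) ∧ S (t + 1) ω = s'}
      = P {ω | ∀ i ≤ t, S i ω = h i} * ENNReal.ofReal (K (h t) s')

/-- The event that the colour of `v` at the first time it is gnostic is red. -/
def redEvent {Ω : Type} (S : ℕ → Ω → (V → Fin 3)) (v : V) : Set Ω :=
  {ω | ∃ t, (∀ t' < t, S t' ω v = 0) ∧ S t ω v = 1}

/-- First time the configuration satisfies `Q` (`∞` if never). -/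
noncomputable def hitTime {Ω : Type} (S : ℕ → Ω → (V → Fin 3))
    (Q : (V → Fin 3) → Prop) (ω : Ω) : ℝ≥0∞ :=
  ⨅ t ∈ {t : ℕ | Q (S t ω)}, (t : ℝ≥0∞)

/-! ### Auxiliary definitions and lemmas -/

/-- Real-valued indicator of a proposition. -/
noncomputable def ind (p : Prop) : ℝ := by classical exact if p then 1 else 0

lemma ind_of (p : Prop) (h : p) : ind p = 1 := by simp [ind, h]
lemma ind_not_of (p : Prop) (h : ¬ p) : ind p = 0 := by simp [ind, h]
lemma ind_congr {p q : Prop} (h : p ↔ q) : ind p = ind q := by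
  by_cases hp : p
  · rw [ind_of _ hp, ind_of _ (h.mp hp)]
  · rw [ind_not_of _ hp, ind_not_of _ (fun hq => hp (h.mpr hq))]

lemma pullResult_ne_zero (s : V → Fin 3) (v w : V) (h : s v ≠ 0) : pullResult s v w ≠ 0 := by
  unfold pullResult; split <;> simp_all

lemma syncKernel_nonneg (H : V → V → ℝ) (hH0 : ∀ v w, 0 ≤ H v w) (s s' : V → Fin 3) :
    0 ≤ syncKernel H s s' := by
  refine Finset.prod_nonneg fun v _ => Finset.sum_nonneg fun w _ => ?_
  split
  · exact hH0 v w
  · exact le_refl 0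

lemma syncKernel_eq_zero (H : V → V → ℝ) (s s' : V → Fin 3) (v : V)
    (h : ∀ w, pullResult s v w ≠ s' v) : syncKernel H s s' = 0 := by
  apply Finset.prod_eq_zero (Finset.mem_univ v)
  exact Finset.sum_eq_zero fun w _ => if_neg (h w)

lemma syncKernel_marg (H : V → V → ℝ) (hH1 : ∀ v, ∑ w, H v w = 1)
    (s : V → Fin 3) (v : V) (g : Fin 3 → ℝ) :
    ∑ s' : V → Fin 3, syncKernel H s s' * g (s' v)
      = ∑ w, H v w * g (pullResult s v w) := by
  classical
  have h1 : ∀ s' : V → Fin 3, syncKernel H s s' * g (s' v)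
      = ∏ u : V, ((∑ w, if pullResult s u w = s' u then H u w else 0) *
          (if u = v then g (s' u) else 1)) := by
    intro s'
    rw [Finset.prod_mul_distrib]
    congr 1
    simp [Finset.prod_ite_eq']
  simp only [h1]
  have h2 := Finset.prod_univ_sum (fun _ : V => (univ : Finset (Fin 3)))
    (fun u c => (∑ w, if pullResult s u w = c then H u w else 0) * (if u = v then g c else 1))
  rw [Fintype.piFinset_univ] at h2
  rw [← h2]
  rw [Finset.prod_eq_single v]
  · simp only [if_pos rfl, ite_true, Finset.sum_mul]
    rw [Finset.sum_comm]
    refine Finset.sum_congr rfl fun w _ => ?_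
    simp only [ite_mul, zero_mul]
    rw [Finset.sum_ite_eq (univ : Finset (Fin 3)) (pullResult s v w) (fun c => H v w * g c)]
    simp
  · intro u _ hu
    simp only [if_neg hu, mul_one]
    rw [Finset.sum_comm]
    simp only [Finset.sum_ite_eq (univ : Finset (Fin 3))]
    simp [hH1 u]
  · intro h; exact absurd (Finset.mem_univ v) h

lemma syncKernel_sum (H : V → V → ℝ) [Nonempty V] (hH1 : ∀ v, ∑ w, H v w = 1)
    (s : V → Fin 3) : ∑ s' : V → Fin 3, syncKernel H s s' = 1 := by
  have := syncKernel_marg H hH1 s (Classical.arbitrary V) (fun _ => 1)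
  simpa [hH1] using this

lemma kernel_gnostic (H : V → V → ℝ) (s s' : V → Fin 3) (v : V)
    (hk : syncKernel H s s' ≠ 0) (hv : s v ≠ 0) : s' v ≠ 0 := fun h0 =>
  hk (syncKernel_eq_zero H s s' v (fun w => h0 ▸ pullResult_ne_zero s v w hv))

lemma kernel_consensus (H : V → V → ℝ) (s s' : V → Fin 3) (c : Fin 3) (hc : c ≠ 0)
    (hs : ∀ v, s v = c) (v : V) (hv : s' v ≠ c) : syncKernel H s s' = 0 := by
  apply syncKernel_eq_zero H s s' v
  intro w
  have : pullResult s v w = c := by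
    unfold pullResult
    rw [hs w]
    rw [if_neg hc]
  rw [this]
  exact fun h => hv h.symm

lemma ind_pull (s : V → Fin 3) (v w : V) :
    ind (pullResult s v w = 1) = ind (s w = 0) * ind (s v = 1) + ind (s w = 1) := by
  unfold pullResult ind
  split_ifs <;> simp_all

/-- The core algebraic identity using stationarity and reversibility. -/
lemma core_alg (H : V → V → ℝ) (μ : V → ℝ)
    (hstat : ∀ w, ∑ v, μ v * H v w = μ w)
    (hrev : ∀ v w, μ v * H v w = μ w * H w v)
    (s : V → Fin 3) :
    ∑ v, μ v * (∑ w, H v w * ind (pullResult s v w = 1) - ind (s v = 1))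
      = ∑ v, μ v * (ind (s v = 0) * ∑ w, H v w * ind (pullResult s v w = 1)) := by
  have hz : ∀ v, ind (s v = 0) * ind (s v = 1) = 0 := by
    intro v; unfold ind; split_ifs <;> simp_all
  simp only [ind_pull, mul_add, Finset.sum_add_distrib, mul_sub, Finset.mul_sum]
  have hmid : (∑ v, ∑ w, μ v * (H v w * ind (s w = 1))) = ∑ v, μ v * ind (s v = 1) := by
    rw [Finset.sum_comm]
    refine Finset.sum_congr rfl fun w _ => ?_
    simp only [← mul_assoc, ← Finset.sum_mul, hstat w]
  have key : (∑ v, ∑ w, μ v * (H v w * (ind (s w = 0) * ind (s v = 1))))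
      = ∑ v, ∑ w, μ v * (ind (s v = 0) * (H v w * ind (s w = 1))) := by
    rw [Finset.sum_comm]
    refine Finset.sum_congr rfl fun v _ => Finset.sum_congr rfl fun w _ => ?_
    linear_combination (ind (s v = 0) * ind (s w = 1)) * (hrev w v)
  have hU1 : ∑ v, ∑ w, μ v * (ind (s v = 0) * (H v w * (ind (s w = 0) * ind (s v = 1)))) = 0 := by
    refine Finset.sum_eq_zero fun v _ => Finset.sum_eq_zero fun w _ => ?_
    linear_combination (μ v * (H v w * ind (s w = 0))) * hz v
  rw [Finset.sum_sub_distrib, Finset.sum_add_distrib, hmid, hU1, zero_add, add_sub_cancel_right]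
  exact key

/-- `v` is red at the first time it is gnostic, within the first `t` steps of history `h`. -/
def RBP (h : ℕ → (V → Fin 3)) (t : ℕ) (v : V) : Prop :=
  ∃ t' ≤ t, (∀ u < t', h u v = 0) ∧ h t' v = 1

lemma RBP_congr {h h' : ℕ → (V → Fin 3)} {t : ℕ} {v : V} (he : ∀ i ≤ t, h i = h' i) :
    RBP h t v ↔ RBP h' t v := by
  constructor <;> rintro ⟨t', ht', h0, h1⟩
  · exact ⟨t', ht', fun u hu => by rw [← he u (by omega)]; exact h0 u hu,
      by rw [← he t' ht']; exact h1⟩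
  · exact ⟨t', ht', fun u hu => by rw [he u (by omega)]; exact h0 u hu,
      by rw [he t' ht']; exact h1⟩

/-- Extending a history by one more configuration. -/
def extH (t : ℕ) (h : ℕ → (V → Fin 3)) (s' : V → Fin 3) : ℕ → (V → Fin 3) :=
  fun i => if i ≤ t then h i else s'

lemma extH_le {t : ℕ} (h : ℕ → (V → Fin 3)) (s' : V → Fin 3) {i : ℕ} (hi : i ≤ t) :
    extH t h s' i = h i := if_pos hi

lemma extH_succ {t : ℕ} (h : ℕ → (V → Fin 3)) (s' : V → Fin 3) :
    extH t h s' (t+1) = s' := if_neg (by omega)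

lemma RBP_ext (h : ℕ → (V → Fin 3)) (s' : V → Fin 3) (t : ℕ) (v : V) :
    RBP (extH t h s') (t+1) v ↔ RBP h t v ∨ ((∀ u ≤ t, h u v = 0) ∧ s' v = 1) := by
  constructor
  · rintro ⟨t', ht', h0, h1⟩
    by_cases hle : t' ≤ t
    · left
      refine ⟨t', hle, fun u hu => ?_, ?_⟩
      · rw [← extH_le h s' (show u ≤ t by omega)]; exact h0 u hu
      · rw [← extH_le h s' hle]; exact h1
    · have ht'' : t' = t + 1 := by omega
      subst ht''
      right
      refine ⟨fun u hu => ?_, ?_⟩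
      · rw [← extH_le h s' hu]; exact h0 u (by omega)
      · rw [← extH_succ h s' (t := t)]; exact h1
  · rintro (⟨t', ht', h0, h1⟩ | ⟨h0, h1⟩)
    · exact ⟨t', by omega, fun u hu => by
        rw [extH_le h s' (show u ≤ t by omega)]; exact h0 u hu,
        by rw [extH_le h s' ht']; exact h1⟩
    · exact ⟨t + 1, le_rfl, fun u hu => by
        rw [extH_le h s' (show u ≤ t by omega)]; exact h0 u (by omega),
        by rw [extH_succ]; exact h1⟩

/-- The key one-step algebraic identity for the martingale argument. -/
lemma step_alg [Nonempty V] (H : V → V → ℝ) (μ : V → ℝ)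
    (hH1 : ∀ v, ∑ w, H v w = 1)
    (hstat : ∀ w, ∑ v, μ v * H v w = μ w)
    (hrev : ∀ v w, μ v * H v w = μ w * H w v)
    (h : ℕ → (V → Fin 3)) (t : ℕ)
    (hmono : ∀ v i, i < t → h i v ≠ 0 → h (i+1) v ≠ 0) :
    ∑ v, μ v * ((∑ s' : V → Fin 3, syncKernel H (h t) s' * ind (s' v = 1))
        - ∑ s' : V → Fin 3, syncKernel H (h t) s' * ind (h t v = 1))
      = ∑ v, μ v * ((∑ s' : V → Fin 3, syncKernel H (h t) s'
            * ind (RBP h t v ∨ ((∀ u ≤ t, h u v = 0) ∧ s' v = 1)))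
        - ∑ s' : V → Fin 3, syncKernel H (h t) s' * ind (RBP h t v)) := by
  have hchain : ∀ v i, i ≤ t → h i v ≠ 0 → h t v ≠ 0 := by
    intro v i hi hne
    have main : ∀ j, i ≤ j → j ≤ t → h j v ≠ 0 := by
      intro j
      induction j with
      | zero =>
        intro h1 _
        have hi0 : i = 0 := Nat.le_zero.mp h1
        subst hi0
        exact hne
      | succ j ih =>
        intro h1 h2
        by_cases hij : i ≤ j
        · exact hmono v j (by omega) (ih hij (by omega))
        · have hij' : i = j + 1 := by omega
          subst hij'
          exact hne
    exact main t hi le_rfl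
  have hAg : ∀ v, h t v = 0 → ∀ u, u ≤ t → h u v = 0 := by
    intro v hv u hu
    by_contra hne
    exact hchain v u hu hne hv
  have hsum1 : ∑ s' : V → Fin 3, syncKernel H (h t) s' = 1 := syncKernel_sum H hH1 (h t)
  have hmarg : ∀ v, ∑ s' : V → Fin 3, syncKernel H (h t) s' * ind (s' v = 1)
      = ∑ w, H v w * ind (pullResult (h t) v w = 1) :=
    fun v => syncKernel_marg H hH1 (h t) v (fun c => ind (c = 1))
  have hsplit : ∀ (v : V) (s' : V → Fin 3),
      ind (RBP h t v ∨ ((∀ u ≤ t, h u v = 0) ∧ s' v = 1))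
      = ind (RBP h t v) + ind (h t v = 0) * ind (s' v = 1) := by
    intro v s'
    by_cases hr : RBP h t v
    · have hne : h t v ≠ 0 := by
        obtain ⟨t', ht', _, h1⟩ := hr
        exact hchain v t' ht' (by rw [h1]; decide)
      rw [ind_of _ (Or.inl hr), ind_of _ hr, ind_not_of _ hne, zero_mul, add_zero]
    · rw [ind_not_of _ hr, zero_add]
      by_cases h0 : h t v = 0
      · by_cases h1 : s' v = 1
        · rw [ind_of _ (Or.inr ⟨fun u hu => hAg v h0 u hu, h1⟩), ind_of _ h0, ind_of _ h1,
            one_mul]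
        · rw [ind_not_of _ ?_, ind_not_of _ h1, mul_zero]
          rintro (hc | hc)
          · exact hr hc
          · exact h1 hc.2
      · rw [ind_not_of _ ?_, ind_not_of _ h0, zero_mul]
        rintro (hc | hc)
        · exact hr hc
        · exact h0 (hc.1 t le_rfl)
  simp only [hsplit, mul_add, Finset.sum_add_distrib]
  have collapse1 : ∀ v : V, ∑ s' : V → Fin 3, syncKernel H (h t) s' * ind (h t v = 1)
      = ind (h t v = 1) := fun v => by rw [← Finset.sum_mul, hsum1, one_mul]
  have collapse2 : ∀ v : V,
      ∑ s' : V → Fin 3, syncKernel H (h t) s' * (ind (h t v = 0) * ind (s' v = 1))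
      = ind (h t v = 0) * ∑ w, H v w * ind (pullResult (h t) v w = 1) := by
    intro v
    rw [← hmarg v, Finset.mul_sum]
    exact Finset.sum_congr rfl fun s' _ => by ring
  simp only [collapse1, collapse2, hmarg, add_sub_cancel_left]
  exact core_alg H μ hstat hrev (h t)

section Meas
variable {Ω : Type} [MeasurableSpace Ω]

/-- Cylinder event. -/
def cylEvent (S : ℕ → Ω → (V → Fin 3)) (t : ℕ) (h : ℕ → (V → Fin 3)) : Set Ω :=
  {ω | ∀ i ≤ t, S i ω = h i}

/-- Padding a finite history to an infinite one. -/
def padH (t : ℕ) (g : Fin (t+1) → (V → Fin 3)) : ℕ → (V → Fin 3) :=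
  fun i => g ⟨min i t, Nat.lt_succ_of_le (min_le_right i t)⟩

lemma padH_eq {t : ℕ} (g : Fin (t+1) → (V → Fin 3)) {i : ℕ} (h : i ≤ t) :
    padH t g i = g ⟨i, Nat.lt_succ_of_le h⟩ := by
  simp [padH, min_eq_left h]

variable (S : ℕ → Ω → (V → Fin 3))

lemma measSet_eq (hm : ∀ t, Measurable (S t)) (t : ℕ) (c : V → Fin 3) :
    MeasurableSet {ω | S t ω = c} :=
  (hm t) (measurableSet_singleton c)

lemma measSet_apply (hm : ∀ t, Measurable (S t)) (t : ℕ) (v : V) (c : Fin 3) :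
    MeasurableSet {ω | S t ω v = c} :=
  ((measurable_pi_apply v).comp (hm t)) (measurableSet_singleton c)

lemma measSet_cyl (hm : ∀ t, Measurable (S t)) (t : ℕ) (h : ℕ → (V → Fin 3)) :
    MeasurableSet (cylEvent S t h) := by
  have : cylEvent S t h = ⋂ i ∈ Set.Iic t, {ω | S i ω = h i} := by
    ext ω; simp [cylEvent, Set.mem_iInter]
  rw [this]
  exact MeasurableSet.biInter (Set.to_countable _) fun i _ => measSet_eq S hm i (h i)

lemma measSet_RBP (hm : ∀ t, Measurable (S t)) (t : ℕ) (v : V) :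
    MeasurableSet {ω | RBP (fun i => S i ω) t v} := by
  have : {ω | RBP (fun i => S i ω) t v}
      = ⋃ t' ∈ Set.Iic t, ((⋂ u ∈ Set.Iio t', {ω | S u ω v = 0}) ∩ {ω | S t' ω v = 1}) := by
    ext ω
    simp only [RBP, Set.mem_iUnion, Set.mem_iInter, Set.mem_inter_iff, Set.mem_setOf_eq,
      Set.mem_Iic, Set.mem_Iio]
    tauto
  rw [this]
  exact MeasurableSet.biUnion (Set.to_countable _) fun t' _ =>
    (MeasurableSet.biInter (Set.to_countable _) fun u _ =>
      measSet_apply S hm u v 0).inter (measSet_apply S hm t' v 1)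

/-- The event that `v` is red at time `t`. -/
def AvE (t : ℕ) (v : V) : Set Ω := {ω | S t ω v = 1}

/-- The event that `v` is red at its first gnostic time, within time `t`. -/
def RBE (t : ℕ) (v : V) : Set Ω := {ω | RBP (fun i => S i ω) t v}

variable (P : Measure Ω) [IsProbabilityMeasure P]
variable {K : (V → Fin 3) → (V → Fin 3) → ℝ} {s₀ : V → Fin 3}

lemma markov_step (hS : IsVoterProcess P K S s₀) (t : ℕ) (h : ℕ → (V → Fin 3))
    (s' : V → Fin 3) :
    P (cylEvent S t h ∩ {ω | S (t+1) ω = s'})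
      = P (cylEvent S t h) * ENNReal.ofReal (K (h t) s') := by
  have := hS.2.2 t h s'
  convert this using 2 <;> rfl

lemma cyl_succ (t : ℕ) (h : ℕ → (V → Fin 3)) :
    cylEvent S (t+1) h = cylEvent S t h ∩ {ω | S (t+1) ω = h (t+1)} := by
  ext ω
  constructor
  · intro hω
    exact ⟨fun i hi => hω i (by omega), hω (t+1) le_rfl⟩
  · rintro ⟨h1, h2⟩ i hi
    rcases Nat.lt_succ_iff_lt_or_eq.mp (Nat.lt_succ_of_le hi) with h' | h'
    · exact h1 i (by omega)
    · subst h'; exact h2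

lemma prob_cyl_succ (hS : IsVoterProcess P K S s₀) (t : ℕ) (h : ℕ → (V → Fin 3)) :
    P (cylEvent S (t+1) h) = P (cylEvent S t h) * ENNReal.ofReal (K (h t) (h (t+1))) := by
  rw [cyl_succ, markov_step S P hS]

lemma cyl_zero_of_kernel (hS : IsVoterProcess P K S s₀) (t : ℕ) (h : ℕ → (V → Fin 3))
    (i : ℕ) (hi : i < t) (h0 : K (h i) (h (i+1)) = 0) : P (cylEvent S t h) = 0 := by
  have hsub : cylEvent S t h ⊆ cylEvent S (i+1) h := fun ω hω j hj => hω j (by omega)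
  have h1 := prob_cyl_succ S P hS i h
  rw [h0] at h1
  simp only [ENNReal.ofReal_zero, mul_zero] at h1
  exact measure_mono_null hsub h1

lemma prob_partition (hm : ∀ t, Measurable (S t)) (t : ℕ) (A : Set Ω)
    (hA : MeasurableSet A) :
    P A = ∑ g : Fin (t+1) → (V → Fin 3), P (A ∩ cylEvent S t (padH t g)) := by
  classical
  have hcover : ⋃ g ∈ (univ : Finset (Fin (t+1) → (V → Fin 3))),
      (A ∩ cylEvent S t (padH t g)) = A := by
    apply Set.Subset.antisymm
    · intro ω hω
      simp only [Set.mem_iUnion] at hω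
      obtain ⟨g, _, hg, _⟩ := hω
      exact hg
    · intro ω hω
      simp only [Set.mem_iUnion]
      refine ⟨fun i => S i ω, mem_univ _, hω, fun i hi => ?_⟩
      rw [padH_eq _ hi]
  have hdisj : Set.PairwiseDisjoint
      ((univ : Finset (Fin (t+1) → (V → Fin 3))) : Set (Fin (t+1) → (V → Fin 3)))
      (fun g => A ∩ cylEvent S t (padH t g)) := by
    intro g _ g' _ hne
    refine Set.disjoint_left.mpr fun ω hω hω' => hne (funext fun i => ?_)
    have h1 := hω.2 i (Nat.lt_succ_iff.mp i.2)
    have h2 := hω'.2 i (Nat.lt_succ_iff.mp i.2)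
    rw [padH_eq _ (Nat.lt_succ_iff.mp i.2)] at h1 h2
    simp only [Fin.eta] at h1 h2
    rw [← h1, h2]
  conv_lhs => rw [← hcover]
  rw [measure_biUnion_finset hdisj
    (fun g _ => hA.inter (measSet_cyl S hm t (padH t g)))]

/-- Null transitions lemma. -/
lemma prob_bad_zero (hS : IsVoterProcess P K S s₀)
    (Bad : (V → Fin 3) → (V → Fin 3) → Prop)
    (hBad : ∀ s s', Bad s s' → K s s' = 0) :
    P {ω | ∃ t, Bad (S t ω) (S (t+1) ω)} = 0 := by
  classical
  have h0 : ∀ (t : ℕ) (g : Fin (t+1) → (V → Fin 3)) (s' : V → Fin 3),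
      P ({ω' : Ω | Bad (padH t g t) s'} ∩
        (cylEvent S t (padH t g) ∩ {ω | S (t+1) ω = s'})) = 0 := by
    intro t g s'
    by_cases hb : Bad (padH t g t) s'
    · refine le_antisymm ?_ zero_le
      calc P _ ≤ P (cylEvent S t (padH t g) ∩ {ω | S (t+1) ω = s'}) :=
            measure_mono Set.inter_subset_right
        _ = P (cylEvent S t (padH t g)) * ENNReal.ofReal (K (padH t g t) s') :=
            markov_step S P hS t _ s'
        _ = 0 := by rw [hBad _ _ hb]; simp
    · have : {ω' : Ω | Bad (padH t g t) s'} = ∅ :=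
        Set.eq_empty_iff_forall_notMem.mpr fun ω => hb
      rw [this, Set.empty_inter]; simp
  refine measure_mono_null ?_ (measure_iUnion_null fun t : ℕ =>
    measure_iUnion_null fun g : Fin (t+1) → (V → Fin 3) =>
    measure_iUnion_null fun s' : V → Fin 3 => h0 t g s')
  intro ω hω
  obtain ⟨t, hb⟩ := hω
  simp only [Set.mem_iUnion]
  refine ⟨t, fun i => S (min i t) ω, S (t+1) ω, ?_, ?_, rfl⟩
  · show Bad (padH t _ t) _
    rw [padH_eq _ le_rfl]
    simpa using hb
  · intro i hi
    rw [padH_eq _ hi]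
    simp [min_eq_left hi]

/-- Master decomposition: probability of an event determined by the trajectory up to
time `t+1`, as a sum over histories. -/
lemma prob_det_succ (hS : IsVoterProcess P K S s₀) (hK0 : ∀ s s', 0 ≤ K s s')
    (t : ℕ) (B : Set Ω) (hB : MeasurableSet B)
    (Q : (ℕ → (V → Fin 3)) → Prop)
    (hdet : ∀ ω (h : ℕ → (V → Fin 3)), (∀ i ≤ t + 1, S i ω = h i) → (ω ∈ B ↔ Q h)) :
    (P B).toReal = ∑ g : Fin (t+1) → (V → Fin 3), ∑ s' : V → Fin 3,
      (P (cylEvent S t (padH t g))).toReal * K (padH t g t) s'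
        * ind (Q (extH t (padH t g) s')) := by
  classical
  rw [prob_partition S P hS.1 t B hB]
  rw [ENNReal.toReal_sum (fun g _ => measure_ne_top P _)]
  refine Finset.sum_congr rfl fun g _ => ?_
  have hcover : B ∩ cylEvent S t (padH t g)
      = ⋃ s' ∈ (univ : Finset (V → Fin 3)),
          (B ∩ (cylEvent S t (padH t g) ∩ {ω | S (t+1) ω = s'})) := by
    apply Set.Subset.antisymm
    · intro ω hω
      simp only [Set.mem_iUnion]
      exact ⟨S (t+1) ω, mem_univ _, hω.1, hω.2, rfl⟩
    · intro ω hω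
      simp only [Set.mem_iUnion] at hω
      obtain ⟨s', _, h1, h2, _⟩ := hω
      exact ⟨h1, h2⟩
  have hdisj : Set.PairwiseDisjoint
      ((univ : Finset (V → Fin 3)) : Set (V → Fin 3))
      (fun s' => B ∩ (cylEvent S t (padH t g) ∩ {ω | S (t+1) ω = s'})) := by
    intro a _ b _ hne
    refine Set.disjoint_left.mpr fun ω hω hω' => hne ?_
    rw [← hω.2.2, hω'.2.2]
  rw [hcover, measure_biUnion_finset hdisj (fun s' _ => hB.inter
    ((measSet_cyl S hS.1 t (padH t g)).inter (measSet_eq S hS.1 (t+1) s')))]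
  rw [ENNReal.toReal_sum (fun s' _ => measure_ne_top P _)]
  refine Finset.sum_congr rfl fun s' _ => ?_
  have htraj : ∀ ω, ω ∈ cylEvent S t (padH t g) ∩ {ω | S (t+1) ω = s'} →
      ∀ i ≤ t + 1, S i ω = extH t (padH t g) s' i := by
    rintro ω ⟨h1, h2⟩ i hi
    by_cases hit : i ≤ t
    · rw [extH_le _ _ hit]; exact h1 i hit
    · have : i = t + 1 := by omega
      subst this
      rw [extH_succ]; exact h2
  by_cases hq : Q (extH t (padH t g) s')
  · have : B ∩ (cylEvent S t (padH t g) ∩ {ω | S (t+1) ω = s'})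
        = cylEvent S t (padH t g) ∩ {ω | S (t+1) ω = s'} := by
      apply Set.Subset.antisymm Set.inter_subset_right
      intro ω hω
      exact ⟨(hdet ω _ (htraj ω hω)).mpr hq, hω⟩
    rw [this, markov_step S P hS t _ s', ind_of _ hq, mul_one,
      ENNReal.toReal_mul, ENNReal.toReal_ofReal (hK0 _ _)]
  · have : B ∩ (cylEvent S t (padH t g) ∩ {ω | S (t+1) ω = s'}) = ∅ := by
      rw [Set.eq_empty_iff_forall_notMem]
      intro ω hω
      exact hq ((hdet ω _ (htraj ω hω.2)).mp hω.1)
    rw [this, ind_not_of _ hq, mul_zero]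
    simp

end Meas

theorem voter_model_red_consensus_probability
    {V : Type} [Fintype V] [DecidableEq V] [Nonempty V]
    (H : V → V → ℝ) (μ : V → ℝ)
    (hH0 : ∀ v w, 0 ≤ H v w) (hH1 : ∀ v, ∑ w, H v w = 1)
    (hμ0 : ∀ v, 0 ≤ μ v) (hμ1 : ∑ v, μ v = 1)
    (hstat : ∀ w, ∑ v, μ v * H v w = μ w)
    (hrev : ∀ v w, μ v * H v w = μ w * H w v)
    {Ω : Type} [m : MeasurableSpace Ω] (P : Measure Ω) [IsProbabilityMeasure P]
    (S : ℕ → Ω → (V → Fin 3)) (s₀ : V → Fin 3)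
    (hS : IsVoterProcess P (syncKernel H) S s₀)
    (hconv : P {ω | ∃ t, (∀ v, S t ω v = 1) ∨ (∀ v, S t ω v = 2)} = 1) :
    (P {ω | ∃ t, ∀ v, S t ω v = 1}).toReal
      = ∑ v : V, μ v * (P (redEvent S v)).toReal := by
  classical
  have hK0 : ∀ s s' : V → Fin 3, 0 ≤ syncKernel H s s' := syncKernel_nonneg H hH0
  have measAv : ∀ t v, MeasurableSet (AvE S t v) := fun t v => measSet_apply S hS.1 t v 1
  have measRB : ∀ t v, MeasurableSet (RBE S t v) := fun t v => measSet_RBP S hS.1 t v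
  -- The key conservation identity.
  have key : ∀ t, (∑ v, μ v * (P (AvE S t v)).toReal) = ∑ v, μ v * (P (RBE S t v)).toReal := by
    intro t
    induction t with
    | zero =>
      refine Finset.sum_congr rfl fun v _ => ?_
      have hA0 : AvE S 0 v = RBE S 0 v := by
        ext ω
        simp only [AvE, RBE, Set.mem_setOf_eq, RBP]
        constructor
        · intro h1
          exact ⟨0, le_rfl, fun u hu => absurd hu (Nat.not_lt_zero u), h1⟩
        · rintro ⟨t', ht', _, h1⟩
          have ht0 : t' = 0 := Nat.le_zero.mp ht'
          subst ht0
          exact h1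
      rw [hA0]
    | succ t ih =>
      have eA1 : ∀ v, (P (AvE S (t+1) v)).toReal
          = ∑ g : Fin (t+1) → (V → Fin 3), ∑ s' : V → Fin 3,
              (P (cylEvent S t (padH t g))).toReal * syncKernel H (padH t g t) s'
                * ind (s' v = 1) := by
        intro v
        have hd := prob_det_succ S P hS hK0 t (AvE S (t+1) v) (measAv (t+1) v)
          (fun h => h (t+1) v = 1)
          (fun ω h hag => by
            show S (t+1) ω v = 1 ↔ _
            rw [hag (t+1) le_rfl])
        rw [hd]
        refine Finset.sum_congr rfl fun g _ => Finset.sum_congr rfl fun s' _ => ?_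
        congr 1
        exact ind_congr (by
          show extH t (padH t g) s' (t+1) v = 1 ↔ s' v = 1
          rw [extH_succ])
      have eA0 : ∀ v, (P (AvE S t v)).toReal
          = ∑ g : Fin (t+1) → (V → Fin 3), ∑ s' : V → Fin 3,
              (P (cylEvent S t (padH t g))).toReal * syncKernel H (padH t g t) s'
                * ind (padH t g t v = 1) := by
        intro v
        have hd := prob_det_succ S P hS hK0 t (AvE S t v) (measAv t v)
          (fun h => h t v = 1)
          (fun ω h hag => by
            show S t ω v = 1 ↔ _
            rw [hag t (by omega)])
        rw [hd]
        refine Finset.sum_congr rfl fun g _ => Finset.sum_congr rfl fun s' _ => ?_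
        congr 1
        exact ind_congr (by
          show extH t (padH t g) s' t v = 1 ↔ padH t g t v = 1
          rw [extH_le _ _ (le_refl t)])
      have eR0 : ∀ v, (P (RBE S t v)).toReal
          = ∑ g : Fin (t+1) → (V → Fin 3), ∑ s' : V → Fin 3,
              (P (cylEvent S t (padH t g))).toReal * syncKernel H (padH t g t) s'
                * ind (RBP (padH t g) t v) := by
        intro v
        have hd := prob_det_succ S P hS hK0 t (RBE S t v) (measRB t v)
          (fun h => RBP h t v)
          (fun ω h hag => RBP_congr (fun i hi => hag i (by omega)))
        rw [hd]
        refine Finset.sum_congr rfl fun g _ => Finset.sum_congr rfl fun s' _ => ?_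
        congr 1
        exact ind_congr (RBP_congr (fun i hi => extH_le _ _ hi))
      have eR1 : ∀ v, (P (RBE S (t+1) v)).toReal
          = ∑ g : Fin (t+1) → (V → Fin 3), ∑ s' : V → Fin 3,
              (P (cylEvent S t (padH t g))).toReal * syncKernel H (padH t g t) s'
                * ind (RBP (padH t g) t v ∨ ((∀ u ≤ t, padH t g u v = 0) ∧ s' v = 1)) := by
        intro v
        have hd := prob_det_succ S P hS hK0 t (RBE S (t+1) v) (measRB (t+1) v)
          (fun h => RBP h (t+1) v)
          (fun ω h hag => RBP_congr (fun i hi => hag i hi))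
        rw [hd]
        refine Finset.sum_congr rfl fun g _ => Finset.sum_congr rfl fun s' _ => ?_
        congr 1
        exact ind_congr (RBP_ext (padH t g) s' t v)
      have hstep : ∑ v, μ v * ((P (AvE S (t+1) v)).toReal - (P (AvE S t v)).toReal)
          = ∑ v, μ v * ((P (RBE S (t+1) v)).toReal - (P (RBE S t v)).toReal) := by
        simp only [eA1, eA0, eR1, eR0, ← Finset.sum_sub_distrib, Finset.mul_sum]
        rw [Finset.sum_comm]
        conv_rhs => rw [Finset.sum_comm]
        refine Finset.sum_congr rfl fun g _ => ?_
        set c : ℝ := (P (cylEvent S t (padH t g))).toReal with hc_def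
        have expand : ∀ (I J : V → (V → Fin 3) → ℝ),
            (∑ v, ∑ s' : V → Fin 3, μ v *
              (c * syncKernel H (padH t g t) s' * I v s'
                - c * syncKernel H (padH t g t) s' * J v s'))
            = c * ∑ v, μ v *
              ((∑ s' : V → Fin 3, syncKernel H (padH t g t) s' * I v s')
                - ∑ s' : V → Fin 3, syncKernel H (padH t g t) s' * J v s') := by
          intro I J
          rw [Finset.mul_sum]
          refine Finset.sum_congr rfl fun v _ => ?_
          have hterm : ∀ s' : V → Fin 3, μ v *
              (c * syncKernel H (padH t g t) s' * I v s'
                - c * syncKernel H (padH t g t) s' * J v s')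
              = c * (μ v * (syncKernel H (padH t g t) s' * I v s'))
                - c * (μ v * (syncKernel H (padH t g t) s' * J v s')) := fun s' => by ring
          simp only [hterm, Finset.sum_sub_distrib, ← Finset.mul_sum]
          ring
        rw [expand (fun v s' => ind (s' v = 1)) (fun v s' => ind (padH t g t v = 1)),
          expand (fun v s' => ind (RBP (padH t g) t v ∨ ((∀ u ≤ t, padH t g u v = 0) ∧ s' v = 1)))
            (fun v s' => ind (RBP (padH t g) t v))]
        by_cases hc : c = 0
        · rw [hc, zero_mul, zero_mul]
        · congr 1
          have hcyl : P (cylEvent S t (padH t g)) ≠ 0 := by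
            intro h0
            exact hc (by rw [hc_def, h0]; simp)
          have hmono : ∀ v i, i < t → padH t g i v ≠ 0 → padH t g (i+1) v ≠ 0 := by
            intro v i hi
            refine kernel_gnostic H _ _ v (fun h0 => ?_)
            exact hcyl (cyl_zero_of_kernel S P hS t (padH t g) i hi h0)
          exact step_alg H μ hH1 hstat hrev (padH t g) t hmono
      simp only [mul_sub, Finset.sum_sub_distrib] at hstep
      linarith [hstep, ih]
  -- measurability of the consensus events
  have hCred_meas : MeasurableSet {ω : Ω | ∃ t, ∀ v, S t ω v = 1} := by
    have : {ω : Ω | ∃ t, ∀ v, S t ω v = 1} = ⋃ t : ℕ, ⋂ v : V, {ω | S t ω v = 1} := by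
      ext ω; simp [Set.mem_iUnion, Set.mem_iInter]
    rw [this]
    exact MeasurableSet.iUnion fun t => MeasurableSet.iInter fun v =>
      measSet_apply S hS.1 t v 1
  have hConv_meas : MeasurableSet {ω : Ω | ∃ t, (∀ v, S t ω v = 1) ∨ (∀ v, S t ω v = 2)} := by
    have : {ω : Ω | ∃ t, (∀ v, S t ω v = 1) ∨ (∀ v, S t ω v = 2)}
        = ⋃ t : ℕ, ((⋂ v : V, {ω | S t ω v = 1}) ∪ (⋂ v : V, {ω | S t ω v = 2})) := by
      ext ω; simp [Set.mem_iUnion, Set.mem_iInter]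
    rw [this]
    exact MeasurableSet.iUnion fun t =>
      (MeasurableSet.iInter fun v => measSet_apply S hS.1 t v 1).union
      (MeasurableSet.iInter fun v => measSet_apply S hS.1 t v 2)
  -- a.e. absorption and convergence
  have nullR : P {ω | ∃ t, ((∀ v, S t ω v = 1) ∧ ¬(∀ v, S (t+1) ω v = 1))} = 0 := by
    apply prob_bad_zero S P hS (fun s s' => (∀ v, s v = 1) ∧ ¬(∀ v, s' v = 1))
    rintro s s' ⟨h1, h2⟩
    push_neg at h2
    obtain ⟨v, hv⟩ := h2
    exact kernel_consensus H s s' 1 (by decide) h1 v hv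
  have nullB : P {ω | ∃ t, ((∀ v, S t ω v = 2) ∧ ¬(∀ v, S (t+1) ω v = 2))} = 0 := by
    apply prob_bad_zero S P hS (fun s s' => (∀ v, s v = 2) ∧ ¬(∀ v, s' v = 2))
    rintro s s' ⟨h1, h2⟩
    push_neg at h2
    obtain ⟨v, hv⟩ := h2
    exact kernel_consensus H s s' 2 (by decide) h1 v hv
  have aeR : ∀ᵐ ω ∂P, ∀ t, (∀ v, S t ω v = 1) → (∀ v, S (t+1) ω v = 1) := by
    rw [ae_iff]
    refine measure_mono_null ?_ nullR
    intro ω hω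
    simp only [Set.mem_setOf_eq] at hω ⊢
    push_neg at hω
    obtain ⟨t, h1, h2⟩ := hω
    exact ⟨t, h1, fun hall => by obtain ⟨u, hu⟩ := h2; exact hu (hall u)⟩
  have aeB : ∀ᵐ ω ∂P, ∀ t, (∀ v, S t ω v = 2) → (∀ v, S (t+1) ω v = 2) := by
    rw [ae_iff]
    refine measure_mono_null ?_ nullB
    intro ω hω
    simp only [Set.mem_setOf_eq] at hω ⊢
    push_neg at hω
    obtain ⟨t, h1, h2⟩ := hω
    exact ⟨t, h1, fun hall => by obtain ⟨u, hu⟩ := h2; exact hu (hall u)⟩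
  have aeC : ∀ᵐ ω ∂P, ∃ t, (∀ v, S t ω v = 1) ∨ (∀ v, S t ω v = 2) := by
    rw [ae_iff]
    have hcc : P {ω : Ω | ∃ t, (∀ v, S t ω v = 1) ∨ (∀ v, S t ω v = 2)}ᶜ = 0 := by
      rw [measure_compl hConv_meas (measure_ne_top P _), hconv]
      simp
    rw [← Set.compl_setOf]
    exact hcc
  -- pointwise convergence of indicators
  have aeTend : ∀ v : V, ∀ᵐ ω ∂P,
      Filter.Tendsto (fun t => Set.indicator (AvE S t v) (fun _ => (1:ℝ)) ω)
        Filter.atTop (nhds (Set.indicator {ω : Ω | ∃ t, ∀ v, S t ω v = 1}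
          (fun _ => (1:ℝ)) ω)) := by
    intro v
    filter_upwards [aeR, aeB, aeC] with ω hR hB hC
    have hRup : ∀ T, (∀ u, S T ω u = 1) → ∀ t, T ≤ t → ∀ u, S t ω u = 1 := by
      intro T h1 t ht
      induction t, ht using Nat.le_induction with
      | base => exact h1
      | succ n hn ih => exact hR n ih
    have hBup : ∀ T, (∀ u, S T ω u = 2) → ∀ t, T ≤ t → ∀ u, S t ω u = 2 := by
      intro T h1 t ht
      induction t, ht using Nat.le_induction with
      | base => exact h1
      | succ n hn ih => exact hB n ih
    obtain ⟨T, hT⟩ := hC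
    rcases hT with h1 | h2
    · have hmem : ω ∈ {ω : Ω | ∃ t, ∀ v, S t ω v = 1} := ⟨T, h1⟩
      rw [Set.indicator_of_mem hmem]
      refine Filter.Tendsto.congr' ?_ tendsto_const_nhds
      refine Filter.eventually_atTop.mpr ⟨T, fun t ht => ?_⟩
      exact (Set.indicator_of_mem (s := AvE S t v) (show ω ∈ AvE S t v from hRup T h1 t ht v) (fun _ => (1:ℝ))).symm
    · have hnmem : ω ∉ {ω : Ω | ∃ t, ∀ v, S t ω v = 1} := by
        rintro ⟨t, h1⟩
        rcases le_total T t with hle | hle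
        · have hx := hBup T h2 t hle v
          rw [h1 v] at hx
          exact absurd hx (by decide)
        · have hx := hRup t h1 T hle v
          rw [h2 v] at hx
          exact absurd hx (by decide)
      rw [Set.indicator_of_notMem hnmem]
      refine Filter.Tendsto.congr' ?_ tendsto_const_nhds
      refine Filter.eventually_atTop.mpr ⟨T, fun t ht => ?_⟩
      have hnm : ω ∉ AvE S t v := by
        intro hmem'
        have hx := hBup T h2 t ht v
        rw [show S t ω v = 1 from hmem'] at hx
        exact absurd hx (by decide)
      exact (Set.indicator_of_notMem hnm _).symm
  -- convergence of probabilities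
  have tendAv : ∀ v, Filter.Tendsto (fun t => (P (AvE S t v)).toReal) Filter.atTop
      (nhds ((P {ω : Ω | ∃ t, ∀ v, S t ω v = 1}).toReal)) := by
    intro v
    have hmeasF : ∀ t : ℕ, AEStronglyMeasurable
        (fun ω => Set.indicator (AvE S t v) (fun _ => (1:ℝ)) ω) P :=
      fun t => (measurable_const.indicator (measAv t v)).aestronglyMeasurable
    have hbound : ∀ t : ℕ, ∀ᵐ ω ∂P,
        ‖Set.indicator (AvE S t v) (fun _ => (1:ℝ)) ω‖ ≤ (1:ℝ) := by
      intro t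
      filter_upwards with ω
      by_cases hω : ω ∈ AvE S t v
      · rw [Set.indicator_of_mem hω]; simp
      · rw [Set.indicator_of_notMem hω]; simp
    have htend := tendsto_integral_of_dominated_convergence (μ := P)
      (bound := fun _ => (1:ℝ)) hmeasF (integrable_const 1) hbound (aeTend v)
    have hInt : ∀ (A : Set Ω), MeasurableSet A →
        (∫ ω, Set.indicator A (fun _ => (1:ℝ)) ω ∂P) = (P A).toReal := by
      intro A hA
      rw [integral_indicator_const (1:ℝ) hA]
      simp
      rfl
    rw [hInt _ hCred_meas] at htend
    exact Filter.Tendsto.congr (fun t => hInt _ (measAv t v)) htend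
  have tendA : Filter.Tendsto (fun t => ∑ v, μ v * (P (AvE S t v)).toReal) Filter.atTop
      (nhds (∑ v, μ v * (P {ω : Ω | ∃ t, ∀ v, S t ω v = 1}).toReal)) :=
    tendsto_finset_sum univ (fun v _ => (tendAv v).const_mul (μ v))
  have tendR : Filter.Tendsto (fun t => ∑ v, μ v * (P (RBE S t v)).toReal) Filter.atTop
      (nhds (∑ v, μ v * (P (redEvent S v)).toReal)) := by
    refine tendsto_finset_sum _ fun v _ => Filter.Tendsto.const_mul (μ v) ?_
    have hmon : Monotone (fun t => RBE S t v) := by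
      intro a b hab ω hω
      obtain ⟨t', ht', h0, h1⟩ := hω
      exact ⟨t', le_trans ht' hab, h0, h1⟩
    have hU : ⋃ t, RBE S t v = redEvent S v := by
      ext ω
      simp only [Set.mem_iUnion, redEvent, Set.mem_setOf_eq, RBE, RBP]
      constructor
      · rintro ⟨t, t', ht', h0, h1⟩
        exact ⟨t', h0, h1⟩
      · rintro ⟨t, h0, h1⟩
        exact ⟨t, t, le_rfl, h0, h1⟩
    have hten := tendsto_measure_iUnion_atTop (μ := P) hmon
    rw [hU] at hten
    exact (ENNReal.tendsto_toReal (measure_ne_top P _)).comp hten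
  have tendA' : Filter.Tendsto (fun t => ∑ v, μ v * (P (RBE S t v)).toReal) Filter.atTop
      (nhds (∑ v, μ v * (P {ω : Ω | ∃ t, ∀ v, S t ω v = 1}).toReal)) :=
    Filter.Tendsto.congr (fun t => key t) tendA
  have hfinal := tendsto_nhds_unique tendA' tendR
  rw [← hfinal, ← Finset.sum_mul, hμ1, one_mul]
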